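/- Let k be a commutative ring, A an associative unital k-algebra, and e = Σ e¹⊗e² ∈ A⊗A an A-central element, i.e. (a⊗1)·e = e·(1⊗a) in A⊗A for all a ∈ A. Then in A⊗A⊗A one has e¹²e²³ = e²³e¹³ = e¹³e¹², i.e. e is a solution of the FS-equation. -/

import Mathlib

open TensorProduct

variable {k A : Type*} [CommRing k] [Ring A] [Algebra k A]

/-- The map `A ⊗ A → A ⊗ A ⊗ A`, `x ⊗ y ↦ x ⊗ y ⊗ 1`. -/
noncomputable def leg12 : A ⊗[k] A →ₐ[k] A ⊗[k] (A ⊗[k] A) :=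
  Algebra.TensorProduct.map (AlgHom.id k A) Algebra.TensorProduct.includeLeft

/-- The map `A ⊗ A → A ⊗ A ⊗ A`, `x ⊗ y ↦ x ⊗ 1 ⊗ y`. -/
noncomputable def leg13 : A ⊗[k] A →ₐ[k] A ⊗[k] (A ⊗[k] A) :=
  Algebra.TensorProduct.map (AlgHom.id k A) Algebra.TensorProduct.includeRight

/-- The map `A ⊗ A → A ⊗ A ⊗ A`, `x ⊗ y ↦ 1 ⊗ x ⊗ y`. -/
noncomputable def leg23 : A ⊗[k] A →ₐ[k] A ⊗[k] (A ⊗[k] A) :=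
  Algebra.TensorProduct.includeRight

lemma leg12_tmul (x y : A) : leg12 (x ⊗ₜ[k] y) = x ⊗ₜ[k] (y ⊗ₜ[k] (1 : A)) := by
  simp [leg12]

lemma leg13_tmul (x y : A) : leg13 (x ⊗ₜ[k] y) = x ⊗ₜ[k] ((1 : A) ⊗ₜ[k] y) := by
  simp [leg13]

lemma leg23_apply (z : A ⊗[k] A) : leg23 z = (1 : A) ⊗ₜ[k] z := by
  simp [leg23]

/-- `leg12 z` commutes with `1 ⊗ 1 ⊗ b`. -/
lemma leg12_comm_third (b : A) (z : A ⊗[k] A) :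
    leg12 z * ((1 : A) ⊗ₜ[k] ((1 : A) ⊗ₜ[k] b)) =
      ((1 : A) ⊗ₜ[k] ((1 : A) ⊗ₜ[k] b)) * leg12 z := by
  induction z using TensorProduct.induction_on with
  | zero => simp
  | tmul x y => simp [leg12_tmul, Algebra.TensorProduct.tmul_mul_tmul]
  | add u v hu hv => simp [map_add, add_mul, mul_add, hu, hv]

lemma L1 (e : A ⊗[k] A)
    (he : ∀ a : A, (a ⊗ₜ[k] (1 : A)) * e = e * ((1 : A) ⊗ₜ[k] a)) (x : A ⊗[k] A) :
    leg12 x * leg23 e = leg23 e * leg13 x := by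
  induction x using TensorProduct.induction_on with
  | zero => simp
  | tmul a b =>
      rw [leg12_tmul, leg13_tmul, leg23_apply,
        Algebra.TensorProduct.tmul_mul_tmul, Algebra.TensorProduct.tmul_mul_tmul,
        mul_one, one_mul, he b]
  | add u v hu hv => simp [map_add, add_mul, mul_add, hu, hv]

lemma L2 (e : A ⊗[k] A)
    (he : ∀ a : A, (a ⊗ₜ[k] (1 : A)) * e = e * ((1 : A) ⊗ₜ[k] a)) (x : A ⊗[k] A) :
    leg13 x * leg12 e = leg12 e * leg23 x := by
  induction x using TensorProduct.induction_on with
  | zero => simp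
  | tmul a b =>
      have h1 : leg13 (a ⊗ₜ[k] b) =
          leg12 (a ⊗ₜ[k] (1 : A)) * ((1 : A) ⊗ₜ[k] ((1 : A) ⊗ₜ[k] b)) := by
        rw [leg13_tmul, leg12_tmul, Algebra.TensorProduct.tmul_mul_tmul]
        simp
      have h2 : leg12 ((1 : A) ⊗ₜ[k] a) * ((1 : A) ⊗ₜ[k] ((1 : A) ⊗ₜ[k] b)) =
          leg23 (a ⊗ₜ[k] b) := by
        rw [leg12_tmul, leg23_apply, Algebra.TensorProduct.tmul_mul_tmul]
        simp
      calc leg13 (a ⊗ₜ[k] b) * leg12 e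
          = leg12 (a ⊗ₜ[k] (1 : A)) * (((1 : A) ⊗ₜ[k] ((1 : A) ⊗ₜ[k] b)) * leg12 e) := by
            rw [h1, mul_assoc]
        _ = leg12 (a ⊗ₜ[k] (1 : A)) * (leg12 e * ((1 : A) ⊗ₜ[k] ((1 : A) ⊗ₜ[k] b))) := by
            rw [leg12_comm_third]
        _ = leg12 ((a ⊗ₜ[k] (1 : A)) * e) * ((1 : A) ⊗ₜ[k] ((1 : A) ⊗ₜ[k] b)) := by
            rw [map_mul, mul_assoc]
        _ = leg12 (e * ((1 : A) ⊗ₜ[k] a)) * ((1 : A) ⊗ₜ[k] ((1 : A) ⊗ₜ[k] b)) := by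
            rw [he a]
        _ = leg12 e * (leg12 ((1 : A) ⊗ₜ[k] a) * ((1 : A) ⊗ₜ[k] ((1 : A) ⊗ₜ[k] b))) := by
            rw [map_mul, mul_assoc]
        _ = leg12 e * leg23 (a ⊗ₜ[k] b) := by rw [h2]
  | add u v hu hv => simp [map_add, add_mul, mul_add, hu, hv]

/-- An `A`-central element `e ∈ A ⊗ A` is a solution of the FS-equation
`e¹²e²³ = e²³e¹³ = e¹³e¹²`. -/
theorem central_element_satisfies_FS_equation
    (e : A ⊗[k] A)
    (he : ∀ a : A, (a ⊗ₜ[k] (1 : A)) * e = e * ((1 : A) ⊗ₜ[k] a)) :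
    leg12 e * leg23 e = leg23 e * leg13 e ∧
      leg23 e * leg13 e = leg13 e * leg12 e := by
  refine ⟨L1 e he e, ?_⟩
  rw [← L1 e he e, ← L2 e he e]
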